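/- Let T²₁₁ be ℤ³ with the bilinear form given by the Gram matrix [[6,-2,-2],[-2,8,-3],[-2,-3,8]], and write Q(x) = (x,x). Then: (i) the minimal value of Q over nonzero vectors x ∈ ℤ³ is 6; (ii) there is no primitive vector x ∈ ℤ³ with Q(x) ∈ {12, 14, 16, 20}; (iii) there exists a primitive vector f ∈ ℤ³ of divisor 2 (i.e., (f,y) ∈ 2ℤ for all y ∈ ℤ³) with Q(f) = 6, and 6 is the minimal value of Q over such vectors. -/

import Mathlib

open Matrix

/-!
Invariant polarizations of the twistor family `TW(X₂)`:  properties of the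
positive definite even lattice `T²₁₁` with Gram matrix
`[[6,-2,-2],[-2,8,-3],[-2,-3,8]]`.
-/

/-- The Gram matrix of `T²₁₁`. -/
def T2 : Matrix (Fin 3) (Fin 3) ℤ := !![6, -2, -2; -2, 8, -3; -2, -3, 8]

/-- The bilinear form of `T²₁₁`. -/
def bil (x y : Fin 3 → ℤ) : ℤ := x ⬝ᵥ T2.mulVec y

/-- The quadratic form `Q(x) = (x, x)` of `T²₁₁`. -/
def Q (x : Fin 3 → ℤ) : ℤ := bil x x

/-- `x` is primitive: the gcd of its coordinates is `1`. -/
def IsPrimitiveVec (x : Fin 3 → ℤ) : Prop :=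
  Int.gcd (Int.gcd (x 0) (x 1)) (x 2) = 1

/-- `x` has divisor `2`: `(x, y) ∈ 2ℤ` for all `y ∈ ℤ³`. -/
def HasDivisorTwo (x : Fin 3 → ℤ) : Prop := ∀ y : Fin 3 → ℤ, 2 ∣ bil x y

/-- Explicit formula for the bilinear form. -/
lemma bil_eq (x y : Fin 3 → ℤ) : bil x y =
    6*x 0*y 0 - 2*x 0*y 1 - 2*x 0*y 2 - 2*x 1*y 0 + 8*x 1*y 1 - 3*x 1*y 2
    - 2*x 2*y 0 - 3*x 2*y 1 + 8*x 2*y 2 := by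
  have h00 : T2 0 0 = 6 := rfl
  have h01 : T2 0 1 = -2 := rfl
  have h02 : T2 0 2 = -2 := rfl
  have h10 : T2 1 0 = -2 := rfl
  have h11 : T2 1 1 = 8 := rfl
  have h12 : T2 1 2 = -3 := rfl
  have h20 : T2 2 0 = -2 := rfl
  have h21 : T2 2 1 = -3 := rfl
  have h22 : T2 2 2 = 8 := rfl
  simp only [bil, Matrix.mulVec, dotProduct, Fin.sum_univ_three,
    h00, h01, h02, h10, h11, h12, h20, h21, h22]
  ring

/-- Key identity: `3 Q(a,b,c) = 2 (3a - b - c)² + 22 (b² - bc + c²)`. -/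
lemma key (x : Fin 3 → ℤ) :
    3 * Q x = 2*(3*x 0 - x 1 - x 2)^2 + 22*((x 1)^2 - x 1 * x 2 + (x 2)^2) := by
  rw [Q, bil_eq]; ring

/-- Mod 11, `2u²` never takes the values `3, 9, 4, 5`. -/
lemma zmod11 : ∀ u : ZMod 11, 2*u^2 ≠ 3 ∧ 2*u^2 ≠ 9 ∧ 2*u^2 ≠ 4 ∧ 2*u^2 ≠ 5 := by decide

/-- The square of any nonzero vector is at least `6`. -/
lemma Q_lb (x : Fin 3 → ℤ) (hx : x ≠ 0) : 6 ≤ Q x := by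
  have hk := key x
  set s := 3*x 0 - x 1 - x 2 with hs
  set m := (x 1)^2 - x 1 * x 2 + (x 2)^2 with hm
  have hs2 : 0 ≤ s^2 := sq_nonneg s
  have hm4 : 4*m = (2*x 1 - x 2)^2 + 3*(x 2)^2 := by rw [hm]; ring
  by_cases h12 : x 1 = 0 ∧ x 2 = 0
  · have ha : x 0 ≠ 0 := by
      intro h0
      apply hx
      funext i
      fin_cases i <;> simp [h0, h12.1, h12.2]
    have ha2 : 1 ≤ (x 0)^2 := by nlinarith [Int.one_le_abs ha, sq_abs (x 0)]
    have hq : 3 * Q x = 18 * (x 0)^2 := by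
      rw [hk, hs, hm, h12.1, h12.2]; ring
    nlinarith
  · have hm1 : 1 ≤ m := by
      rcases not_and_or.mp h12 with h | h
      · nlinarith [sq_nonneg (2*x 1 - x 2), sq_nonneg (x 2), sq_nonneg (x 1),
          Int.one_le_abs (by simpa using h : x 1 ≠ 0), sq_abs (x 1), sq_nonneg (x 1 - x 2)]
      · nlinarith [sq_nonneg (2*x 1 - x 2),
          Int.one_le_abs (by simpa using h : x 2 ≠ 0), sq_abs (x 2)]
    nlinarith

/-- (i) the least square of a nonzero vector of `T²₁₁` is `6`;
(ii) `T²₁₁` contains no primitive vector of square `12`, `14`, `16` or `20`;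
(iii) the least square of a primitive vector of divisor `2` in `T²₁₁`
is `6`. -/
theorem T2_polarizations :
    IsLeast {q : ℤ | ∃ x : Fin 3 → ℤ, x ≠ 0 ∧ Q x = q} 6 ∧
    (¬ ∃ x : Fin 3 → ℤ, IsPrimitiveVec x ∧
      (Q x = 12 ∨ Q x = 14 ∨ Q x = 16 ∨ Q x = 20)) ∧
    IsLeast {q : ℤ | ∃ f : Fin 3 → ℤ, IsPrimitiveVec f ∧ HasDivisorTwo f ∧ Q f = q}
      6 := by
  have hQe : Q ![1,0,0] = 6 := by rw [Q, bil_eq]; norm_num [show (![1,0,0] : Fin 3 → ℤ) 2 = 0 from rfl]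
  refine ⟨⟨⟨![1,0,0], ?_, hQe⟩, ?_⟩, ?_, ⟨![1,0,0], ?_, ?_, hQe⟩, ?_⟩
  · intro h
    have : (1 : ℤ) = 0 := by
      have := congrFun h 0
      simp at this
    norm_num at this
  · rintro q ⟨x, hx, rfl⟩
    exact Q_lb x hx
  · rintro ⟨x, -, hq⟩
    have hk := key x
    set s := 3*x 0 - x 1 - x 2 with hs
    set m := (x 1)^2 - x 1 * x 2 + (x 2)^2 with hm
    have hz := zmod11 ((s : ℤ) : ZMod 11)
    have h22 : (22 : ZMod 11) = 0 := by decide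
    have hcast : (2:ZMod 11)*((s:ℤ):ZMod 11)^2 = ((3 * Q x : ℤ) : ZMod 11) := by
      push_cast [hk]
      linear_combination (-(m : ZMod 11)) * h22
    rcases hq with h | h | h | h <;> rw [h] at hcast <;> norm_num at hcast
    · exact hz.1 hcast
    · exact hz.2.1 hcast
    · exact hz.2.2.1 hcast
    · exact hz.2.2.2 hcast
  · simp [IsPrimitiveVec]
  · intro y
    rw [bil_eq]
    refine ⟨3*y 0 - y 1 - y 2, ?_⟩
    norm_num [show (![1,0,0] : Fin 3 → ℤ) 2 = 0 from rfl]
    ring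
  · rintro q ⟨f, hprim, -, rfl⟩
    apply Q_lb
    intro h0
    rw [h0] at hprim
    simp [IsPrimitiveVec] at hprim
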